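/- Let R be a commutative ring in which 2 is invertible and let θ be a ring automorphism of R with θ(θ(x)) = x for all x. Let I and J be ideals of R with θ(I) ⊆ I and θ(J) ⊆ J. Suppose r₁, r₂ ∈ I + J satisfy r₁·θ(r₁) = r₂ + θ(r₂). Then there exist a₁, a₂ ∈ I and b₁, b₂ ∈ J such that a₁·θ(a₁) = a₂ + θ(a₂), b₁·θ(b₁) = b₂ + θ(b₂), r₁ = a₁ + b₁, and r₂ = a₂ + b₂ + θ(a₁)·b₁. (Equivalently, 𝒜(I + J) = 𝒜(I) ⊕ 𝒜(J), where ⊕ is the operation (t,u) ⊕ (t′,u′) = (t + t′, u + u′ + θ(t)·t′).) -/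
import Mathlib


/-- `𝒜(I + J) = 𝒜(I) ⊕ 𝒜(J)` for `θ`-invariant ideals `I`, `J` of a commutative ring with
`2` invertible and `θ` an involutive ring automorphism. -/
theorem stmt_9 {R : Type*} [CommRing R] (h2 : IsUnit (2 : R))
    (θ : R ≃+* R) (hθ : ∀ x, θ (θ x) = x)
    (I J : Ideal R) (hI : ∀ x ∈ I, θ x ∈ I) (hJ : ∀ x ∈ J, θ x ∈ J)
    (r₁ r₂ : R) (hr₁ : r₁ ∈ I + J) (hr₂ : r₂ ∈ I + J)
    (hr : r₁ * θ r₁ = r₂ + θ r₂) :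
    ∃ a₁ ∈ I, ∃ a₂ ∈ I, ∃ b₁ ∈ J, ∃ b₂ ∈ J,
      a₁ * θ a₁ = a₂ + θ a₂ ∧ b₁ * θ b₁ = b₂ + θ b₂ ∧
      r₁ = a₁ + b₁ ∧ r₂ = a₂ + b₂ + θ a₁ * b₁ := by
  obtain ⟨e, he⟩ := h2.exists_right_inv
  have hθ2 : θ (2 : R) = 2 := by
    rw [show (2 : R) = 1 + 1 by norm_num, map_add, map_one]
  have he' : (2 : R) * θ e = 1 := by
    have := congrArg θ he
    rw [map_mul, hθ2, map_one] at this
    exact this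
  have hθe : θ e = e := by linear_combination e * he' - θ e * he
  rw [Ideal.add_eq_sup, Submodule.mem_sup] at hr₁ hr₂
  obtain ⟨a₁, ha₁, b₁, hb₁, hab⟩ := hr₁
  obtain ⟨x, hx, y, hy, hxy⟩ := hr₂
  subst hab
  subst hxy
  rw [map_add, map_add] at hr
  refine ⟨a₁, ha₁, e * (a₁ * θ a₁ + x - θ x), ?_, b₁, hb₁,
    (x + y) - e * (a₁ * θ a₁ + x - θ x) - θ a₁ * b₁, ?_, ?_, ?_, rfl, by ring⟩
  · exact I.mul_mem_left e (sub_mem (add_mem (I.mul_mem_right _ ha₁) hx) (hI x hx))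
  · have key : (x + y) - e * (a₁ * θ a₁ + x - θ x) - θ a₁ * b₁
        = e * (a₁ * θ b₁ + θ a₁ * b₁ + b₁ * θ b₁ - y - θ y) + y - θ a₁ * b₁ := by
      linear_combination -e * hr - x * he
    rw [key]
    exact sub_mem (add_mem (J.mul_mem_left e (sub_mem (sub_mem (add_mem (add_mem
      (J.mul_mem_left a₁ (hJ b₁ hb₁)) (J.mul_mem_left (θ a₁) hb₁))
      (J.mul_mem_right (θ b₁) hb₁)) hy) (hJ y hy))) hy) (J.mul_mem_left (θ a₁) hb₁)
  · simp only [map_mul, map_sub, map_add, hθ, hθe]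
    linear_combination -(a₁ * θ a₁) * he
  · simp only [map_mul, map_sub, map_add, hθ, hθe]
    linear_combination hr + a₁ * θ a₁ * he
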